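/- Let Ω = B(x₀, r) ⊂ ℝ³ be an open ball and κ, κ' > 0 constants. Let D be of class C¹ and strictly positive on an open neighborhood of the closure of Ω, let σ_a be continuous on the closure, and let w be continuous with w(x) ≠ 0 for every x ∈ Ω. Let δσ_a and δσ̃_a be continuous on Ω, and let (δw, δφ₂) and (δw̃, δφ̃₂) be of class C² on an open neighborhood of the closure of Ω, each satisfying in Ω the linearized simplified P₂ system: −∇·(D∇δw) + (1 + 4/(9κ))σ_a δw − (10/(27κ'))(1/D)δφ₂ = −(1 + 4/(9κ)) w δσ_a and −∇·(D∇δφ₂) + (5/(9κ'))(1/D)δφ₂ − (2/(3κ))σ_a δw = (2/(3κ)) w δσ_a (with δσ̃_a in place of δσ_a for the tilde pair), together with the boundary condition n·(D∇δφ₂) + (5/(24κ))δφ₂ − (1/(8κ))δw = 0 on ∂Ω (likewise for the tilde quantities). If δw = δw̃ on the closure of Ω, then δσ_a = δσ̃_a on Ω. -/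

import Mathlib

open Metric Set
open scoped RealInnerProductSpace

/-- Divergence of a vector field on ℝⁿ at a point: the trace of its Jacobian. -/
noncomputable def vdiv {n : ℕ} (V : EuclideanSpace ℝ (Fin n) → EuclideanSpace ℝ (Fin n))
    (x : EuclideanSpace ℝ (Fin n)) : ℝ :=
  LinearMap.trace ℝ (EuclideanSpace ℝ (Fin n)) (fderiv ℝ V x).toLinearMap

/-- The linearized (in the absorption coefficient) simplified P₂ system on Ω. -/
def LinSP2a {n : ℕ} (Ω : Set (EuclideanSpace ℝ (Fin n))) (κ κ' : ℝ)
    (D σa w δσa δw δφ₂ : EuclideanSpace ℝ (Fin n) → ℝ) : Prop :=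
  ∀ x ∈ Ω,
    (-vdiv (fun y => D y • gradient δw y) x
        + (1 + 4 / (9 * κ)) * (σa x * δw x) - 10 / (27 * κ') * (1 / D x) * δφ₂ x
        = -((1 + 4 / (9 * κ)) * (w x * δσa x))) ∧
    (-vdiv (fun y => D y • gradient δφ₂ y) x
        + 5 / (9 * κ') * (1 / D x) * δφ₂ x - 2 / (3 * κ) * (σa x * δw x)
        = 2 / (3 * κ) * (w x * δσa x))


open Filter
open scoped Topology

noncomputable abbrev E3 := EuclideanSpace ℝ (Fin 3)

/-- One-dimensional second-derivative test at a local maximum. -/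
lemma second_deriv_test {g f : ℝ → ℝ} {a : ℝ}
    (hfg : ∀ᶠ t in 𝓝 (0:ℝ), HasDerivAt g (f t) t)
    (hf : HasDerivAt f a 0) (hmax : IsLocalMax g 0) : a ≤ 0 := by
  by_contra hcon
  push_neg at hcon
  have hg0 : HasDerivAt g (f 0) 0 := hfg.self_of_nhds
  have hf0 : f 0 = 0 := by rw [← hg0.deriv]; exact hmax.deriv_eq_zero
  have hslope : Tendsto (slope f 0) (𝓝[≠] 0) (𝓝 a) := hasDerivAt_iff_tendsto_slope.1 hf
  have hpos : ∀ᶠ t in 𝓝[>] (0:ℝ), 0 < f t := by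
    have h1 : ∀ᶠ t in 𝓝[>] (0:ℝ), 0 < slope f 0 t := by
      have hle : (𝓝[>] (0:ℝ)) ≤ 𝓝[≠] 0 :=
        nhdsWithin_mono _ (by intro t ht; simpa using ne_of_gt ht)
      exact (hslope.mono_left hle).eventually (eventually_gt_nhds hcon)
    filter_upwards [h1, self_mem_nhdsWithin] with t ht ht0
    rw [slope_def_field, hf0, sub_zero, sub_zero] at ht
    have := mul_pos ht (show (0:ℝ) < t from ht0)
    rwa [div_mul_cancel₀ _ (ne_of_gt ht0)] at this
  have hpos' : ∀ᶠ t in 𝓝 (0:ℝ), 0 < t → 0 < f t := by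
    rw [eventually_nhdsWithin_iff] at hpos
    filter_upwards [hpos] with t ht ht0
    exact ht ht0
  have hall : ∀ᶠ t in 𝓝 (0:ℝ), (HasDerivAt g (f t) t ∧ g t ≤ g 0) ∧ (0 < t → 0 < f t) :=
    (hfg.and hmax).and hpos'
  rw [Metric.eventually_nhds_iff] at hall
  obtain ⟨ε, hε, hprop⟩ := hall
  set δ := ε / 2 with hδ
  have hδ0 : 0 < δ := by positivity
  have hin : ∀ t ∈ Icc (0:ℝ) δ, dist t 0 < ε := by
    intro t ht
    rw [Real.dist_eq, sub_zero]
    rw [abs_of_nonneg ht.1]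
    calc t ≤ δ := ht.2
    _ < ε := by simp [hδ]; linarith
  have hmono : StrictMonoOn g (Icc 0 δ) := by
    apply strictMonoOn_of_deriv_pos (convex_Icc 0 δ)
    · intro t ht
      exact ((hprop (hin t ht)).1.1).continuousAt.continuousWithinAt
    · intro t ht
      rw [interior_Icc] at ht
      have h := hprop (hin t ⟨ht.1.le, ht.2.le⟩)
      rw [h.1.1.deriv]
      exact h.2 ht.1
  have h1 : g 0 < g δ := hmono ⟨le_refl 0, hδ0.le⟩ ⟨hδ0.le, le_refl δ⟩ hδ0
  have h2 : g δ ≤ g 0 := (hprop (hin δ ⟨hδ0.le, le_refl δ⟩)).1.2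
  linarith

/-- At a point that is a maximum from the left, the derivative is nonnegative. -/
lemma deriv_nonneg_of_left_max {g : ℝ → ℝ} {a : ℝ} (hg : HasDerivAt g a 0)
    (h : ∀ᶠ t in 𝓝[<] (0:ℝ), g t ≤ g 0) : 0 ≤ a := by
  have hle : (𝓝[<] (0:ℝ)) ≤ 𝓝[≠] 0 :=
    nhdsWithin_mono _ (by intro t ht; simpa using ne_of_lt ht)
  have hs : Tendsto (slope g 0) (𝓝[<] 0) (𝓝 a) :=
    (hasDerivAt_iff_tendsto_slope.1 hg).mono_left hle
  refine ge_of_tendsto hs ?_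
  filter_upwards [h, self_mem_nhdsWithin] with t ht ht0
  rw [slope_def_field]
  exact div_nonneg_iff.mpr (Or.inr ⟨by linarith, by simpa using le_of_lt ht0⟩)


lemma inner_gradient_eq {v : E3 → ℝ} {y : E3} (w : E3) :
    ⟪gradient v y, w⟫ = fderiv ℝ v y w := by
  rw [gradient]
  exact InnerProductSpace.toDual_symm_apply

lemma fderiv_apply_single {v : E3 → ℝ} {y : E3} (i : Fin 3) :
    fderiv ℝ v y (EuclideanSpace.single i 1) = gradient v y i := by
  rw [← inner_gradient_eq, EuclideanSpace.inner_single_right]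
  simp

lemma gradient_contDiffOn {v : E3 → ℝ} {U : Set E3} (hU : IsOpen U)
    (hv : ContDiffOn ℝ 2 v U) : ContDiffOn ℝ 1 (fun y => gradient v y) U := by
  have h := hv.fderiv_of_isOpen (m := 1) hU (by norm_num)
  have heq : (fun y => gradient v y)
      = fun y => (InnerProductSpace.toDual ℝ E3).symm (fderiv ℝ v y) := by
    funext y; rw [gradient]
  rw [heq]
  exact (InnerProductSpace.toDual ℝ E3).symm.contDiff.comp_contDiffOn h

/-- Maximum principle for `-∇·(D∇v) + (c/D) v = 0` on a ball with Robin boundary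
condition, `c, β, D > 0`: the solution is nonpositive. -/
lemma max_principle (x₀ : E3) (r : ℝ) (hr : 0 < r) (c β : ℝ) (hc : 0 < c) (hβ : 0 < β)
    (U : Set E3) (hUo : IsOpen U) (hUc : closedBall x₀ r ⊆ U)
    (D : E3 → ℝ) (hDC : ContDiffOn ℝ 1 D U) (hDpos : ∀ x ∈ U, 0 < D x)
    (v : E3 → ℝ) (hv : ContDiffOn ℝ 2 v U)
    (heq : ∀ x ∈ ball x₀ r, vdiv (fun y => D y • gradient v y) x = c * (1 / D x) * v x)
    (hbc : ∀ x ∈ sphere x₀ r, ⟪r⁻¹ • (x - x₀), D x • gradient v x⟫ + β * v x = 0) :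
    ∀ x ∈ closedBall x₀ r, v x ≤ 0 := by
  by_contra hcon
  push_neg at hcon
  obtain ⟨x₁, hx₁, hvx₁⟩ := hcon
  have hvc : ContinuousOn v (closedBall x₀ r) := hv.continuousOn.mono hUc
  obtain ⟨z, hzmem, hzmax⟩ := (isCompact_closedBall x₀ r).exists_isMaxOn
    ⟨x₀, mem_closedBall_self hr.le⟩ hvc
  have hM : 0 < v z := lt_of_lt_of_le hvx₁ (hzmax hx₁)
  have hdiffAt : ∀ y ∈ U, DifferentiableAt ℝ v y := by
    intro y hy
    exact (hv.contDiffAt (hUo.mem_nhds hy)).differentiableAt (by norm_num)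
  rcases lt_or_eq_of_le (mem_closedBall.1 hzmem) with hzb | hzs
  · -- interior maximum
    have hz : z ∈ ball x₀ r := mem_ball.2 hzb
    have hzU : z ∈ U := hUc (ball_subset_closedBall hz)
    have hloc : IsLocalMax v z :=
      hzmax.isLocalMax (Filter.mem_of_superset (isOpen_ball.mem_nhds hz) ball_subset_closedBall)
    have hfz : fderiv ℝ v z = 0 := hloc.fderiv_eq_zero
    set G : E3 → E3 := fun y => gradient v y with hGdef
    have hGz0 : G z = 0 := by
      simp [hGdef, gradient, hfz]
    have hGc : ContDiffOn ℝ 1 G U := gradient_contDiffOn hUo hv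
    have hGdiff : DifferentiableAt ℝ G z :=
      (hGc.contDiffAt (hUo.mem_nhds hzU)).differentiableAt one_ne_zero
    set G' := fderiv ℝ G z with hG'def
    have hG' : HasFDerivAt G G' z := hGdiff.hasFDerivAt
    have hDz : DifferentiableAt ℝ D z :=
      (hDC.contDiffAt (hUo.mem_nhds hzU)).differentiableAt one_ne_zero
    -- derivative of the vector field at z
    have hVd : HasFDerivAt (fun y => D y • G y) (D z • G') z := by
      have h := hDz.hasFDerivAt.smul hG'
      rw [hGz0] at h
      have h0 : (fderiv ℝ D z).smulRight (0 : E3) = 0 := by ext w; simp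
      rwa [h0, add_zero] at h
    -- each diagonal second derivative is nonpositive
    have hterm : ∀ i : Fin 3, (G' (EuclideanSpace.single i 1)) i ≤ 0 := by
      intro i
      set e : E3 := EuclideanSpace.single i (1:ℝ) with hedef
      have hℓ : ∀ t : ℝ, HasDerivAt (fun s : ℝ => z + s • e) e t := by
        intro t
        simpa using ((hasDerivAt_id t).smul_const e).const_add z
      have hcont : Continuous (fun t : ℝ => z + t • e) := by fun_prop
      have hev : ∀ᶠ t in 𝓝 (0:ℝ), z + t • e ∈ ball x₀ r := by
        apply hcont.continuousAt.eventually_mem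
        apply isOpen_ball.mem_nhds
        simpa using hz
      have hfg : ∀ᶠ t in 𝓝 (0:ℝ),
          HasDerivAt (fun s => v (z + s • e)) ((G (z + t • e)) i) t := by
        filter_upwards [hev] with t ht
        have hU' : z + t • e ∈ U := hUc (ball_subset_closedBall ht)
        have hco := (hdiffAt _ hU').hasFDerivAt.comp_hasDerivAt t (hℓ t)
        have : fderiv ℝ v (z + t • e) e = (G (z + t • e)) i := fderiv_apply_single i
        rw [this] at hco
        exact hco
      have hf : HasDerivAt (fun t : ℝ => (G (z + t • e)) i) ((G' e) i) 0 := by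
        have h1 : HasDerivAt (fun t : ℝ => G (z + t • e)) (G' e) 0 :=
          hG'.comp_hasDerivAt_of_eq 0 (hℓ 0) (by simp)
        exact (EuclideanSpace.proj i).hasFDerivAt.comp_hasDerivAt 0 h1
      have hmaxg : IsLocalMax (fun t : ℝ => v (z + t • e)) 0 := by
        filter_upwards [hev] with t ht
        have := hzmax (ball_subset_closedBall ht)
        simpa using this
      exact second_deriv_test hfg hf hmaxg
    -- the trace is nonpositive
    have htr : LinearMap.trace ℝ E3 G'.toLinearMap
        = ∑ i : Fin 3, (G' (EuclideanSpace.single i 1)) i := by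
      rw [LinearMap.trace_eq_matrix_trace ℝ (EuclideanSpace.basisFun (Fin 3) ℝ).toBasis]
      simp [Matrix.trace, Matrix.diag, LinearMap.toMatrix_apply,
        OrthonormalBasis.coe_toBasis_repr_apply, EuclideanSpace.basisFun_repr,
        OrthonormalBasis.coe_toBasis, EuclideanSpace.basisFun_apply]
    have htr0 : LinearMap.trace ℝ E3 G'.toLinearMap ≤ 0 := by
      rw [htr]
      exact Finset.sum_nonpos fun i _ => hterm i
    have hvd : vdiv (fun y => D y • G y) z
        = D z * LinearMap.trace ℝ E3 G'.toLinearMap := by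
      rw [vdiv, hVd.fderiv]
      have : ((D z • G' : E3 →L[ℝ] E3).toLinearMap) = D z • G'.toLinearMap := rfl
      rw [this, map_smul, smul_eq_mul]
    have hDzpos : 0 < D z := hDpos z hzU
    have hrhs : 0 < c * (1 / D z) * v z := by positivity
    have hlhs : vdiv (fun y => D y • G y) z ≤ 0 := by
      rw [hvd]
      exact mul_nonpos_of_nonneg_of_nonpos hDzpos.le htr0
    have := heq z hz
    rw [this] at hlhs
    linarith
  · -- boundary maximum
    have hzs' : z ∈ sphere x₀ r := by rwa [mem_sphere]
    have hzU : z ∈ U := hUc hzmem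
    set n : E3 := r⁻¹ • (z - x₀) with hndef
    have hℓ : ∀ t : ℝ, HasDerivAt (fun s : ℝ => z + s • n) n t := by
      intro t
      simpa using ((hasDerivAt_id t).smul_const n).const_add z
    have hg : HasDerivAt (fun t : ℝ => v (z + t • n)) (fderiv ℝ v z n) 0 :=
      (hdiffAt z hzU).hasFDerivAt.comp_hasDerivAt_of_eq 0 (hℓ 0) (by simp)
    have hnz : ‖z - x₀‖ = r := by
      rw [← dist_eq_norm]; exact hzs
    have hleft : ∀ᶠ t in 𝓝[<] (0:ℝ), v (z + t • n) ≤ v (z + (0:ℝ) • n) := by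
      have hmem : Ioo (-r) 0 ∈ 𝓝[<] (0:ℝ) := Ioo_mem_nhdsLT (by linarith)
      filter_upwards [hmem] with t ht
      have hcb : z + t • n ∈ closedBall x₀ r := by
        rw [mem_closedBall, dist_eq_norm]
        have hrw : z + t • n - x₀ = (1 + t / r) • (z - x₀) := by
          rw [hndef, smul_smul, add_smul, one_smul]
          rw [div_eq_mul_inv]
          abel
        rw [hrw, norm_smul, hnz, Real.norm_eq_abs]
        have h1 : -1 < t / r := by
          have := (div_lt_div_iff_of_pos_right hr).mpr ht.1
          rwa [neg_div, div_self hr.ne'] at this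
        have h2 : t / r < 0 := div_neg_of_neg_of_pos ht.2 hr
        rw [abs_of_pos (by linarith)]
        nlinarith
      have := hzmax hcb
      simpa using this
    have hder : 0 ≤ fderiv ℝ v z n := deriv_nonneg_of_left_max hg hleft
    have hbcz := hbc z hzs'
    have hinner : ⟪n, D z • gradient v z⟫ = D z * fderiv ℝ v z n := by
      rw [real_inner_smul_right, real_inner_comm, inner_gradient_eq]
    rw [← hndef, hinner] at hbcz
    have hDzpos : 0 < D z := hDpos z hzU
    nlinarith [mul_pos hβ hM, mul_nonneg hDzpos.le hder]

lemma vdiv_w_eq (x₀ : E3) (r : ℝ) (D δw δw' : E3 → ℝ)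
    (hδw : ∀ x ∈ closedBall x₀ r, δw x = δw' x) :
    ∀ x ∈ ball x₀ r, vdiv (fun y => D y • gradient δw y) x
      = vdiv (fun y => D y • gradient δw' y) x := by
  intro x hx
  have hev : (fun y => D y • gradient δw y) =ᶠ[𝓝 x] (fun y => D y • gradient δw' y) := by
    filter_upwards [isOpen_ball.mem_nhds hx] with y hy
    have hyy : δw =ᶠ[𝓝 y] δw' := by
      filter_upwards [isOpen_ball.mem_nhds hy] with p hp
      exact hδw p (ball_subset_closedBall hp)
    rw [hyy.gradient_eq]
  rw [vdiv, vdiv, hev.fderiv_eq]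

lemma aux_nonpos (x₀ : E3) (r : ℝ) (hr : 0 < r)
    (κ κ' : ℝ) (hκ : 0 < κ) (hκ' : 0 < κ')
    (D σa w : E3 → ℝ)
    (hD : ∃ U, IsOpen U ∧ closedBall x₀ r ⊆ U ∧ ContDiffOn ℝ 1 D U ∧ ∀ x ∈ U, 0 < D x)
    (δσa δσa' : E3 → ℝ)
    (δw δφ₂ δw' δφ₂' : E3 → ℝ)
    (hreg : ∃ U, IsOpen U ∧ closedBall x₀ r ⊆ U ∧ ContDiffOn ℝ 2 δw U ∧ ContDiffOn ℝ 2 δφ₂ U)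
    (hreg' : ∃ U, IsOpen U ∧ closedBall x₀ r ⊆ U ∧ ContDiffOn ℝ 2 δw' U ∧ ContDiffOn ℝ 2 δφ₂' U)
    (hsys : LinSP2a (ball x₀ r) κ κ' D σa w δσa δw δφ₂)
    (hsys' : LinSP2a (ball x₀ r) κ κ' D σa w δσa' δw' δφ₂')
    (hbc : ∀ x ∈ sphere x₀ r,
      ⟪r⁻¹ • (x - x₀), D x • gradient δφ₂ x⟫ + 5 / (24 * κ) * δφ₂ x - 1 / (8 * κ) * δw x = 0)
    (hbc' : ∀ x ∈ sphere x₀ r,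
      ⟪r⁻¹ • (x - x₀), D x • gradient δφ₂' x⟫ + 5 / (24 * κ) * δφ₂' x - 1 / (8 * κ) * δw' x = 0)
    (hδw : ∀ x ∈ closedBall x₀ r, δw x = δw' x) :
    ∀ x ∈ closedBall x₀ r, δφ₂ x - δφ₂' x ≤ 0 := by
  obtain ⟨U₁, hU₁o, hU₁c, hDC, hDpos⟩ := hD
  obtain ⟨U₂, hU₂o, hU₂c, hw2, hφ2⟩ := hreg
  obtain ⟨U₃, hU₃o, hU₃c, hw2', hφ2'⟩ := hreg'
  set U : Set E3 := U₁ ∩ (U₂ ∩ U₃) with hUdef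
  have hUo : IsOpen U := hU₁o.inter (hU₂o.inter hU₃o)
  have hUc : closedBall x₀ r ⊆ U := subset_inter hU₁c (subset_inter hU₂c hU₃c)
  set u : E3 → ℝ := fun x => δφ₂ x - δφ₂' x with hudef
  have hφ2U : ContDiffOn ℝ 2 δφ₂ U := hφ2.mono fun y hy => hy.2.1
  have hφ2U' : ContDiffOn ℝ 2 δφ₂' U := hφ2'.mono fun y hy => hy.2.2
  have hDCU : ContDiffOn ℝ 1 D U := hDC.mono fun y hy => hy.1
  have hDposU : ∀ x ∈ U, 0 < D x := fun x hx => hDpos x hx.1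
  have hu2 : ContDiffOn ℝ 2 u U := hφ2U.sub hφ2U'
  have ha : 0 < 1 + 4 / (9 * κ) := by positivity
  set γ : ℝ := 5 * κ / (κ' * (9 * κ + 4)) with hγdef
  have hγpos : 0 < γ := by
    rw [hγdef]
    have : 0 < 9 * κ + 4 := by linarith
    positivity
  have hγa : (1 + 4 / (9 * κ)) * γ = (1 + 4 / (9 * κ)) * (5 / (9 * κ')) - 20 / (81 * κ * κ') := by
    rw [hγdef]
    field_simp
    ring
  have hgradu : ∀ y ∈ U, gradient u y = gradient δφ₂ y - gradient δφ₂' y := by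
    intro y hy
    have h1 : DifferentiableAt ℝ δφ₂ y :=
      (hφ2U.contDiffAt (hUo.mem_nhds hy)).differentiableAt (by norm_num)
    have h2 : DifferentiableAt ℝ δφ₂' y :=
      (hφ2U'.contDiffAt (hUo.mem_nhds hy)).differentiableAt (by norm_num)
    rw [hudef]
    rw [gradient, gradient, gradient, fderiv_fun_sub h1 h2, map_sub]
  -- the elliptic equation satisfied by u
  have heq_u : ∀ x ∈ ball x₀ r,
      vdiv (fun y => D y • gradient u y) x = γ * (1 / D x) * u x := by
    intro x hx
    have hxU : x ∈ U := hUc (ball_subset_closedBall hx)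
    have hGφ : ContDiffOn ℝ 1 (fun y => gradient δφ₂ y) U := gradient_contDiffOn hUo hφ2U
    have hGφ' : ContDiffOn ℝ 1 (fun y => gradient δφ₂' y) U := gradient_contDiffOn hUo hφ2U'
    have hF : ContDiffOn ℝ 1 (fun y => D y • gradient δφ₂ y) U := hDCU.smul hGφ
    have hF' : ContDiffOn ℝ 1 (fun y => D y • gradient δφ₂' y) U := hDCU.smul hGφ'
    have hdF : DifferentiableAt ℝ (fun y => D y • gradient δφ₂ y) x :=
      (hF.contDiffAt (hUo.mem_nhds hxU)).differentiableAt one_ne_zero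
    have hdF' : DifferentiableAt ℝ (fun y => D y • gradient δφ₂' y) x :=
      (hF'.contDiffAt (hUo.mem_nhds hxU)).differentiableAt one_ne_zero
    have hsub : vdiv (fun y => D y • gradient u y) x
        = vdiv (fun y => D y • gradient δφ₂ y) x
          - vdiv (fun y => D y • gradient δφ₂' y) x := by
      have hev : (fun y => D y • gradient u y)
          =ᶠ[𝓝 x] fun y => D y • gradient δφ₂ y - D y • gradient δφ₂' y := by
        filter_upwards [hUo.mem_nhds hxU] with y hy
        rw [hgradu y hy, smul_sub]
      rw [vdiv, vdiv, vdiv, hev.fderiv_eq, fderiv_fun_sub hdF hdF']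
      rw [show ((fderiv ℝ (fun y => D y • gradient δφ₂ y) x
          - fderiv ℝ (fun y => D y • gradient δφ₂' y) x).toLinearMap)
        = (fderiv ℝ (fun y => D y • gradient δφ₂ y) x).toLinearMap
          - (fderiv ℝ (fun y => D y • gradient δφ₂' y) x).toLinearMap from rfl, map_sub]
    obtain ⟨e1, e2⟩ := hsys x hx
    obtain ⟨e1', e2'⟩ := hsys' x hx
    have hwveq := vdiv_w_eq x₀ r D δw δw' hδw x hx
    have hwx : δw x = δw' x := hδw x (ball_subset_closedBall hx)
    rw [hwveq, hwx] at e1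
    rw [hwx] at e2
    -- E1 : (1+4/(9κ)) * (w x * δσa x - w x * δσa' x) = 10/(27κ') * (1/D x) * u x
    have E1 : (1 + 4 / (9 * κ)) * (w x * δσa x - w x * δσa' x)
        = 10 / (27 * κ') * (1 / D x) * (δφ₂ x - δφ₂' x) := by
      linear_combination e1 - e1'
    have key : (1 + 4 / (9 * κ)) * vdiv (fun y => D y • gradient u y) x
        = (1 + 4 / (9 * κ)) * (γ * (1 / D x) * u x) := by
      rw [hsub, hudef]
      linear_combination (-(1 + 4 / (9 * κ))) * e2 + (1 + 4 / (9 * κ)) * e2'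
        - (2 / (3 * κ)) * E1 - ((1 / D x) * (δφ₂ x - δφ₂' x)) * hγa
    exact mul_left_cancel₀ ha.ne' key
  -- the boundary condition satisfied by u
  have hbc_u : ∀ x ∈ sphere x₀ r,
      ⟪r⁻¹ • (x - x₀), D x • gradient u x⟫ + 5 / (24 * κ) * u x = 0 := by
    intro x hxs
    have hxU : x ∈ U := hUc (sphere_subset_closedBall hxs)
    have b1 := hbc x hxs
    have b2 := hbc' x hxs
    have hwx : δw x = δw' x := hδw x (sphere_subset_closedBall hxs)
    rw [hwx] at b1
    rw [hgradu x hxU, hudef]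
    simp only [smul_sub, inner_sub_right] at b1 b2 ⊢
    linear_combination b1 - b2
  exact max_principle x₀ r hr γ (5 / (24 * κ)) hγpos (by positivity) U hUo hUc
    D hDCU hDposU u hu2 heq_u hbc_u


/-- Injectivity of the linearized reconstruction of the absorption coefficient:
δw determines δσa wherever the background solution w does not vanish. -/
theorem stmt_8 (x₀ : EuclideanSpace ℝ (Fin 3)) (r : ℝ) (hr : 0 < r)
    (κ κ' : ℝ) (hκ : 0 < κ) (hκ' : 0 < κ')
    (D σa w : EuclideanSpace ℝ (Fin 3) → ℝ)
    (hD : ∃ U, IsOpen U ∧ closedBall x₀ r ⊆ U ∧ ContDiffOn ℝ 1 D U ∧ ∀ x ∈ U, 0 < D x)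
    (hσ : ContinuousOn σa (closedBall x₀ r))
    (hw : ContinuousOn w (ball x₀ r)) (hw0 : ∀ x ∈ ball x₀ r, w x ≠ 0)
    (δσa δσa' : EuclideanSpace ℝ (Fin 3) → ℝ)
    (hδσ : ContinuousOn δσa (ball x₀ r)) (hδσ' : ContinuousOn δσa' (ball x₀ r))
    (δw δφ₂ δw' δφ₂' : EuclideanSpace ℝ (Fin 3) → ℝ)
    (hreg : ∃ U, IsOpen U ∧ closedBall x₀ r ⊆ U ∧ ContDiffOn ℝ 2 δw U ∧ ContDiffOn ℝ 2 δφ₂ U)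
    (hreg' : ∃ U, IsOpen U ∧ closedBall x₀ r ⊆ U ∧ ContDiffOn ℝ 2 δw' U ∧ ContDiffOn ℝ 2 δφ₂' U)
    (hsys : LinSP2a (ball x₀ r) κ κ' D σa w δσa δw δφ₂)
    (hsys' : LinSP2a (ball x₀ r) κ κ' D σa w δσa' δw' δφ₂')
    (hbc : ∀ x ∈ sphere x₀ r,
      ⟪r⁻¹ • (x - x₀), D x • gradient δφ₂ x⟫ + 5 / (24 * κ) * δφ₂ x - 1 / (8 * κ) * δw x = 0)
    (hbc' : ∀ x ∈ sphere x₀ r,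
      ⟪r⁻¹ • (x - x₀), D x • gradient δφ₂' x⟫ + 5 / (24 * κ) * δφ₂' x - 1 / (8 * κ) * δw' x = 0)
    (hδw : ∀ x ∈ closedBall x₀ r, δw x = δw' x) :
    ∀ x ∈ ball x₀ r, δσa x = δσa' x := by
  have h₁ := aux_nonpos x₀ r hr κ κ' hκ hκ' D σa w hD δσa δσa' δw δφ₂ δw' δφ₂'
    hreg hreg' hsys hsys' hbc hbc' hδw
  have h₂ := aux_nonpos x₀ r hr κ κ' hκ hκ' D σa w hD δσa' δσa δw' δφ₂' δw δφ₂
    hreg' hreg hsys' hsys hbc' hbc (fun x hx => (hδw x hx).symm)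
  have hu0 : ∀ x ∈ closedBall x₀ r, δφ₂ x = δφ₂' x := by
    intro x hx
    have := h₁ x hx
    have := h₂ x hx
    linarith
  intro x hx
  obtain ⟨e1, _⟩ := hsys x hx
  obtain ⟨e1', _⟩ := hsys' x hx
  have hwveq := vdiv_w_eq x₀ r D δw δw' hδw x hx
  have hwx : δw x = δw' x := hδw x (ball_subset_closedBall hx)
  have hφeq : δφ₂ x = δφ₂' x := hu0 x (ball_subset_closedBall hx)
  rw [hwveq, hwx, hφeq] at e1
  have ha : (0:ℝ) < 1 + 4 / (9 * κ) := by positivity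
  have hW : (1 + 4 / (9 * κ)) * (w x * δσa x) = (1 + 4 / (9 * κ)) * (w x * δσa' x) := by
    linear_combination e1 - e1'
  have := mul_left_cancel₀ ha.ne' hW
  exact mul_left_cancel₀ (hw0 x hx) this
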